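/- arXiv:nlin/0608069 — 4 statements merged into one kernel-verified Lean document; each statement's English description precedes it below -/
import Mathlib

section
/- Let μ be an eigenmeasure of the open map T with decay rate Λ. Then: (a) if Λ = 0, then μ(H) = 1, i.e. μ is concentrated in the hole; (b) if Λ = 1, then μ(K) = 1, i.e. μ is an invariant probability measure concentrated on the trapped set; (c) if 0 < Λ < 1, then μ(Γ₊ ∖ K) = 1, i.e. μ is concentrated on the backward trapped set minus the trapped set. -/
open MeasureTheory
open scoped ENNReal

/-- Let `μ` be an eigenmeasure of the open map `T` (restriction of the
invertible map `T̂` to `M = X \ H`) with decay rate `Λ`.  If `Λ = 0` then `μ` is concentrated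
in the hole `H`; if `Λ = 1` then `μ` is concentrated on the trapped set `K = Γ₋ ∩ Γ₊`;
if `0 < Λ < 1` then `μ` is concentrated on `Γ₊ \ K`. -/
theorem eigenmeasure_support
    {X : Type*} [MeasurableSpace X]
    (T : X ≃ X) (hT : Measurable ⇑T) (hT' : Measurable ⇑T.symm)
    (H : Set X) (hH : MeasurableSet H)
    (μ : Measure X) [IsProbabilityMeasure μ]
    (Λ : ℝ≥0∞) (hΛ : Λ ≤ 1)
    (heig : ∀ S : Set X, MeasurableSet S → μ (⇑T ⁻¹' S ∩ Hᶜ) = Λ * μ S) :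
    (Λ = 0 → μ H = 1) ∧
    (Λ = 1 →
      μ ((⋂ j : ℕ, (⇑T)^[j] ⁻¹' Hᶜ) ∩ ⋂ j : ℕ, (⇑T)^[j + 1] '' Hᶜ) = 1) ∧
    (0 < Λ → Λ < 1 →
      μ ((⋂ j : ℕ, (⇑T)^[j + 1] '' Hᶜ) \
          ((⋂ j : ℕ, (⇑T)^[j] ⁻¹' Hᶜ) ∩ ⋂ j : ℕ, (⇑T)^[j + 1] '' Hᶜ)) = 1) := by
  classical
  set Γm : Set X := ⋂ j : ℕ, (⇑T)^[j] ⁻¹' Hᶜ with hΓmdef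
  set Γp : Set X := ⋂ j : ℕ, (⇑T)^[j + 1] '' Hᶜ with hΓpdef
  have hHc : MeasurableSet Hᶜ := hH.compl
  have hΛtop : Λ ≠ ∞ := ne_top_of_le_ne_top (by norm_num) hΛ
  have hμHc : μ Hᶜ = Λ := by simpa using heig Set.univ MeasurableSet.univ
  have hmpre : ∀ j : ℕ, MeasurableSet ((⇑T)^[j] ⁻¹' Hᶜ) := fun j => hHc.preimage (hT.iterate j)
  have hmimg : ∀ j : ℕ, MeasurableSet ((⇑T)^[j] '' Hᶜ) := by
    intro j
    induction j with
    | zero => simpa using hHc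
    | succ k ih =>
      rw [Function.iterate_succ', Set.image_comp, Equiv.image_eq_preimage_symm]
      exact ih.preimage hT'
  have hmΓm : MeasurableSet Γm := MeasurableSet.iInter hmpre
  have hmΓp : MeasurableSet Γp := MeasurableSet.iInter fun j => hmimg (j + 1)
  have hcomplzero : ∀ A : Set X, MeasurableSet A → μ A = 1 → μ Aᶜ = 0 := by
    intro A hA h1
    rw [measure_compl hA (measure_ne_top μ A), h1, measure_univ, tsub_self]
  have hinter : ∀ A B : Set X, MeasurableSet A → μ A = 1 → μ (A ∩ B) = μ B := by
    intro A B hA h1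
    refine le_antisymm (measure_mono Set.inter_subset_right) ?_
    have hsub : B ⊆ (A ∩ B) ∪ Aᶜ := by
      intro x hx
      by_cases h : x ∈ A
      · exact Or.inl ⟨h, hx⟩
      · exact Or.inr h
    calc μ B ≤ μ ((A ∩ B) ∪ Aᶜ) := measure_mono hsub
      _ ≤ μ (A ∩ B) + μ Aᶜ := measure_union_le _ _
      _ = μ (A ∩ B) := by rw [hcomplzero A hA h1, add_zero]
  have hiInter : ∀ s : ℕ → Set X, (∀ i, MeasurableSet (s i)) → (∀ i, μ (s i) = 1) →
      μ (⋂ i, s i) = 1 := by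
    intro s hm h1
    have hc : μ (⋂ i, s i)ᶜ = 0 := by
      rw [Set.compl_iInter]
      exact measure_iUnion_null fun i => hcomplzero _ (hm i) (h1 i)
    have hge : (1 : ℝ≥0∞) ≤ μ (⋂ i, s i) := by
      have h := measure_union_le (μ := μ) (⋂ i, s i) (⋂ i, s i)ᶜ
      rw [Set.union_compl_self, measure_univ, hc, add_zero] at h
      exact h
    exact le_antisymm prob_le_one hge
  -- preimage of the (k+1)-st image is the k-th image
  have hpreimg : ∀ k : ℕ, ⇑T ⁻¹' ((⇑T)^[k + 1] '' Hᶜ) = (⇑T)^[k] '' Hᶜ := by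
    intro k
    rw [Function.iterate_succ', Set.image_comp, Set.preimage_image_eq _ T.injective]
  -- if Λ ≠ 0, all forward images of Hᶜ have full measure
  have himg1 : Λ ≠ 0 → ∀ k : ℕ, μ ((⇑T)^[k + 1] '' Hᶜ) = 1 := by
    intro hΛ0 k
    induction k with
    | zero =>
      have h := heig ((⇑T)^[1] '' Hᶜ) (hmimg 1)
      rw [hpreimg 0] at h
      simp only [Function.iterate_zero, id_eq, Set.image_id'] at h
      rw [Set.inter_self, hμHc] at h
      have h' : Λ * μ ((⇑T)^[1] '' Hᶜ) = Λ * 1 := by rw [mul_one, ← h]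
      exact (ENNReal.mul_right_inj hΛ0 hΛtop).mp h'
    | succ k ih =>
      have h := heig ((⇑T)^[k + 2] '' Hᶜ) (hmimg (k + 2))
      rw [hpreimg (k + 1), hinter _ _ (hmimg (k + 1)) ih, hμHc] at h
      have h' : Λ * μ ((⇑T)^[k + 2] '' Hᶜ) = Λ * 1 := by rw [mul_one, ← h]
      exact (ENNReal.mul_right_inj hΛ0 hΛtop).mp h'
  refine ⟨?_, ?_, ?_⟩
  · -- Λ = 0
    intro h0
    have hc : μ Hᶜ = 0 := by rw [hμHc, h0]
    have hge : (1 : ℝ≥0∞) ≤ μ H := by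
      have h := measure_union_le (μ := μ) H Hᶜ
      rw [Set.union_compl_self, measure_univ, hc, add_zero] at h
      exact h
    exact le_antisymm prob_le_one hge
  · -- Λ = 1
    intro h1
    have hμH : μ H = 0 := by
      have := hcomplzero Hᶜ hHc (by rw [hμHc, h1])
      rwa [compl_compl] at this
    have hinv : ∀ S : Set X, MeasurableSet S → μ (⇑T ⁻¹' S) = μ S := by
      intro S hS
      have he := heig S hS
      rw [h1, one_mul] at he
      refine le_antisymm ?_ (he ▸ measure_mono Set.inter_subset_left)
      have hsub : ⇑T ⁻¹' S ⊆ (⇑T ⁻¹' S ∩ Hᶜ) ∪ H := by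
        intro x hx
        by_cases h : x ∈ H
        · exact Or.inr h
        · exact Or.inl ⟨hx, h⟩
      calc μ (⇑T ⁻¹' S) ≤ μ ((⇑T ⁻¹' S ∩ Hᶜ) ∪ H) := measure_mono hsub
        _ ≤ μ (⇑T ⁻¹' S ∩ Hᶜ) + μ H := measure_union_le _ _
        _ = μ S := by rw [he, hμH, add_zero]
    have hpre1 : ∀ j : ℕ, μ ((⇑T)^[j] ⁻¹' Hᶜ) = 1 := by
      intro j
      induction j with
      | zero => simpa using hμHc.trans h1
      | succ k ih =>
        rw [Function.iterate_succ, Set.preimage_comp]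
        exact (hinv _ (hmpre k)).trans ih
    have hΓm1 : μ Γm = 1 := hiInter _ hmpre hpre1
    have hΓp1 : μ Γp = 1 := hiInter _ (fun j => hmimg (j + 1)) (himg1 (by rw [h1]; exact one_ne_zero))
    rw [hinter Γm Γp hmΓm hΓm1, hΓp1]
  · -- 0 < Λ < 1
    intro h0 hlt
    have hΓm0 : μ Γm = 0 := by
      have hsub : Γm ⊆ ⇑T ⁻¹' Γm ∩ Hᶜ := by
        intro x hx
        rw [hΓmdef, Set.mem_iInter] at hx
        refine ⟨?_, by simpa using hx 0⟩
        rw [Set.mem_preimage, hΓmdef, Set.mem_iInter]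
        intro j
        have := hx (j + 1)
        rwa [Set.mem_preimage, Function.iterate_succ_apply] at this
      have hb := heig Γm hmΓm
      have hle : μ Γm ≤ Λ * μ Γm := hb ▸ measure_mono hsub
      by_contra hne
      have hlt' : Λ * μ Γm < 1 * μ Γm :=
        ENNReal.mul_lt_mul_left hne (measure_ne_top μ Γm) hlt
      rw [one_mul] at hlt'
      exact absurd (lt_of_le_of_lt hle hlt') (lt_irrefl _)
    have hΓp1 : μ Γp = 1 := hiInter _ (fun j => hmimg (j + 1)) (himg1 h0.ne')
    have hΓmc1 : μ Γmᶜ = 1 := by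
      rw [measure_compl hmΓm (measure_ne_top μ Γm), hΓm0, measure_univ, tsub_zero]
    have hdiff : Γp \ (Γm ∩ Γp) = Γp ∩ Γmᶜ := by
      ext x
      simp only [Set.mem_diff, Set.mem_inter_iff, Set.mem_compl_iff]
      tauto
    rw [hdiff, hinter Γp Γmᶜ hmΓp hΓp1, hΓmc1]
end

section
/- Let Λ ∈ [0,1) and let ν be a probability measure on X with ν(Γ₊ ∩ H) = 1. Then μ := (1−Λ)·Σ_{n≥0} Λⁿ·(T̂⁻ⁿ)_*ν, where (T̂⁻ⁿ)_*ν denotes the push-forward of ν under the n-th iterate of T̂⁻¹, is a probability measure on X and is an eigenmeasure of T with decay rate Λ, i.e. μ(T̂⁻¹(S) ∩ M) = Λ·μ(S) for every measurable S ⊆ X. -/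
open MeasureTheory
open scoped ENNReal

set_option maxHeartbeats 1000000 in
/-- For `Λ ∈ [0,1)` and `ν` a probability measure concentrated on
`Γ₊ ∩ H`, the measure `μ = (1-Λ) ∑_{n≥0} Λⁿ (T̂⁻ⁿ)_* ν` is a probability measure and an
eigenmeasure of the open map `T` with decay rate `Λ`. -/
theorem eigenmeasure_construction
    {X : Type*} [MeasurableSpace X]
    (T : X ≃ X) (hT : Measurable ⇑T) (hT' : Measurable ⇑T.symm)
    (H : Set X) (hH : MeasurableSet H)
    (Λ : ℝ≥0∞) (hΛ : Λ < 1)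
    (ν : Measure X) [IsProbabilityMeasure ν]
    (hν : ν ((⋂ j : ℕ, (⇑T)^[j + 1] '' Hᶜ) ∩ H) = 1) :
    IsProbabilityMeasure
        ((1 - Λ) • Measure.sum (fun n : ℕ => Λ ^ n • ν.map ((⇑T.symm)^[n]))) ∧
    ∀ S : Set X, MeasurableSet S →
      ((1 - Λ) • Measure.sum (fun n : ℕ => Λ ^ n • ν.map ((⇑T.symm)^[n])))
          (⇑T ⁻¹' S ∩ Hᶜ)
        = Λ * ((1 - Λ) • Measure.sum (fun n : ℕ => Λ ^ n • ν.map ((⇑T.symm)^[n]))) S := by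
  classical
  have hgm : ∀ n : ℕ, Measurable ((⇑T.symm)^[n]) := fun n => hT'.iterate n
  -- image of iterate equals preimage of inverse iterate
  have himg : ∀ n : ℕ, (⇑T)^[n] '' Hᶜ = (⇑T.symm)^[n] ⁻¹' Hᶜ := by
    intro n
    ext x
    constructor
    · rintro ⟨y, hy, rfl⟩
      show (⇑T.symm)^[n] ((⇑T)^[n] y) ∈ Hᶜ
      have hli : Function.LeftInverse ⇑T.symm ⇑T := T.symm_apply_apply
      rw [(hli.iterate n) y]
      exact hy
    · intro hx
      have hri : Function.LeftInverse ⇑T ⇑T.symm := T.apply_symm_apply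
      exact ⟨(⇑T.symm)^[n] x, hx, (hri.iterate n) x⟩
  -- measurability of the trapped set
  have hmeasΓ : MeasurableSet ((⋂ j : ℕ, (⇑T)^[j + 1] '' Hᶜ) ∩ H) := by
    refine (MeasurableSet.iInter fun j => ?_).inter hH
    rw [himg (j + 1)]
    exact hgm (j + 1) hH.compl
  have h1 : ν (((⋂ j : ℕ, (⇑T)^[j + 1] '' Hᶜ) ∩ H)ᶜ) = 0 :=
    (prob_compl_eq_zero_iff hmeasΓ).mpr hν
  have hHc : ν Hᶜ = 0 :=
    measure_mono_null (Set.compl_subset_compl.mpr Set.inter_subset_right) h1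
  have hGn : ∀ n : ℕ, ν ((⇑T.symm)^[n + 1] ⁻¹' H) = 0 := by
    intro n
    refine measure_mono_null ?_ h1
    intro x hx hmem
    have hΓ : x ∈ (⇑T)^[n + 1] '' Hᶜ := Set.mem_iInter.mp hmem.1 n
    rw [himg (n + 1)] at hΓ
    exact hΓ hx
  -- formula for the measure of a measurable set
  have hsum : ∀ S : Set X, MeasurableSet S →
      ((1 - Λ) • Measure.sum (fun n : ℕ => Λ ^ n • ν.map ((⇑T.symm)^[n]))) S
        = (1 - Λ) * ∑' n : ℕ, Λ ^ n * ν ((⇑T.symm)^[n] ⁻¹' S) := by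
    intro S hS
    rw [Measure.smul_apply, Measure.sum_apply _ hS]
    simp only [Measure.smul_apply, smul_eq_mul]
    congr 1
    exact tsum_congr fun n => by rw [Measure.map_apply (hgm n) hS]
  have h1Λ : (1 : ℝ≥0∞) - Λ ≠ 0 := by
    simp [tsub_eq_zero_iff_le, not_le, hΛ]
  have h1Λ' : (1 : ℝ≥0∞) - Λ ≠ ⊤ :=
    ne_of_lt (lt_of_le_of_lt tsub_le_self ENNReal.one_lt_top)
  constructor
  · constructor
    rw [hsum Set.univ MeasurableSet.univ]
    simp only [Set.preimage_univ, measure_univ, mul_one]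
    rw [ENNReal.tsum_geometric, ENNReal.mul_inv_cancel h1Λ h1Λ']
  · intro S hS
    rw [hsum _ ((hT hS).inter hH.compl), hsum S hS]
    have ha0 : ν ((⇑T.symm)^[0] ⁻¹' (⇑T ⁻¹' S ∩ Hᶜ)) = 0 := by
      simp only [Function.iterate_zero, Set.preimage_id]
      exact measure_mono_null Set.inter_subset_right hHc
    have ha : ∀ n : ℕ, ν ((⇑T.symm)^[n + 1] ⁻¹' (⇑T ⁻¹' S ∩ Hᶜ))
        = ν ((⇑T.symm)^[n] ⁻¹' S) := by
      intro n
      have hset : (⇑T.symm)^[n + 1] ⁻¹' (⇑T ⁻¹' S ∩ Hᶜ)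
          = ((⇑T.symm)^[n] ⁻¹' S) ∩ ((⇑T.symm)^[n + 1] ⁻¹' Hᶜ) := by
        ext x
        have hTx : T ((⇑T.symm)^[n + 1] x) = (⇑T.symm)^[n] x := by
          rw [Function.iterate_succ_apply']
          exact T.apply_symm_apply _
        simp only [Set.mem_inter_iff, Set.mem_preimage, hTx]
      rw [hset]
      refine measure_inter_conull ?_
      rw [← Set.preimage_compl, compl_compl]
      exact hGn n
    rw [tsum_eq_zero_add' ENNReal.summable]
    simp only [pow_zero, one_mul, ha0, zero_add, ha]
    have hts : ∑' n : ℕ, Λ ^ (n + 1) * ν ((⇑T.symm)^[n] ⁻¹' S)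
        = Λ * ∑' n : ℕ, Λ ^ n * ν ((⇑T.symm)^[n] ⁻¹' S) := by
      rw [← ENNReal.tsum_mul_left]
      exact tsum_congr fun n => by rw [pow_succ', mul_assoc]
    rw [hts, mul_left_comm]
end

section
/- Let Λ ∈ (0,1) and let μ be an eigenmeasure of T with decay rate Λ. Then the measure ν := (1−Λ)⁻¹·μ|_H (the restriction of μ to the hole H, normalized) is a probability measure with ν(Γ₊ ∩ H) = 1, and μ admits the representation μ = (1−Λ)·Σ_{n≥0} Λⁿ·(T̂⁻ⁿ)_*ν, where (T̂⁻ⁿ)_*ν denotes the push-forward of ν under the n-th iterate of T̂⁻¹. -/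
open MeasureTheory Filter
open scoped ENNReal Topology
set_option maxHeartbeats 800000

/-- Every eigenmeasure `μ` of the open map `T` with decay rate
`Λ ∈ (0,1)` arises from the construction of Proposition `p:eigen-decompo`: the normalized
restriction `ν = (1-Λ)⁻¹ μ|_H` is a probability measure concentrated on `Γ₊ ∩ H`, and
`μ = (1-Λ) ∑_{n≥0} Λⁿ (T̂⁻ⁿ)_* ν`. -/
theorem eigenmeasure_representation
    {X : Type*} [MeasurableSpace X]
    (T : X ≃ X) (hT : Measurable ⇑T) (hT' : Measurable ⇑T.symm)
    (H : Set X) (hH : MeasurableSet H)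
    (μ : Measure X) [IsProbabilityMeasure μ]
    (Λ : ℝ≥0∞) (hΛ0 : 0 < Λ) (hΛ1 : Λ < 1)
    (heig : ∀ S : Set X, MeasurableSet S → μ (⇑T ⁻¹' S ∩ Hᶜ) = Λ * μ S) :
    IsProbabilityMeasure ((1 - Λ)⁻¹ • μ.restrict H) ∧
    ((1 - Λ)⁻¹ • μ.restrict H) ((⋂ j : ℕ, (⇑T)^[j + 1] '' Hᶜ) ∩ H) = 1 ∧
    μ = (1 - Λ) •
        Measure.sum (fun n : ℕ => Λ ^ n • ((1 - Λ)⁻¹ • μ.restrict H).map ((⇑T.symm)^[n])) := by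
  have hΛtop : Λ ≠ ∞ := hΛ1.trans_le le_top |>.ne
  have h1Λ0 : (1 : ℝ≥0∞) - Λ ≠ 0 := (tsub_pos_of_lt hΛ1).ne'
  have h1Λtop : (1 : ℝ≥0∞) - Λ ≠ ∞ := (tsub_le_self.trans_lt (by norm_num)).ne
  have hcancel : ((1 : ℝ≥0∞) - Λ)⁻¹ * (1 - Λ) = 1 := ENNReal.inv_mul_cancel h1Λ0 h1Λtop
  -- μ H = 1 - Λ
  have hμHc : μ Hᶜ = Λ := by
    have h := heig Set.univ MeasurableSet.univ
    simpa using h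
  have hμH : μ H = 1 - Λ := by
    have := prob_compl_eq_one_sub (μ := μ) hH.compl
    rw [compl_compl, hμHc] at this
    exact this
  -- the key recursion
  have key : ∀ S : Set X, MeasurableSet S →
      μ S = μ (S ∩ H) + Λ * μ (⇑T.symm ⁻¹' S) := by
    intro S hS
    have h1 : μ (S ∩ H) + μ (S \ H) = μ S := measure_inter_add_diff S hH
    have h2 : S \ H = ⇑T ⁻¹' (⇑T.symm ⁻¹' S) ∩ Hᶜ := by
      rw [Set.preimage_preimage]
      simp [Set.diff_eq]
    rw [← h1, h2, heig _ (hT' hS)]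
  -- measurability of preimages
  have hmeasn : ∀ (n : ℕ) (S : Set X), MeasurableSet S →
      MeasurableSet ((⇑T.symm)^[n] ⁻¹' S) := fun n S hS => (hT'.iterate n) hS
  -- iterated recursion
  have iter : ∀ S : Set X, MeasurableSet S → ∀ N : ℕ,
      μ S = (∑ n ∈ Finset.range N, Λ ^ n * μ ((⇑T.symm)^[n] ⁻¹' S ∩ H)) +
        Λ ^ N * μ ((⇑T.symm)^[N] ⁻¹' S) := by
    intro S hS N
    induction N with
    | zero => simp
    | succ N ih =>
      rw [Finset.sum_range_succ, ih, key _ (hmeasn N S hS),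
        Function.iterate_succ, Set.preimage_comp]
      ring
  -- the representation on sets
  have rep : ∀ S : Set X, MeasurableSet S →
      μ S = ∑' n : ℕ, Λ ^ n * μ ((⇑T.symm)^[n] ⁻¹' S ∩ H) := by
    intro S hS
    refine le_antisymm ?_ ?_
    · have hlim : Tendsto (fun N : ℕ => Λ ^ N) atTop (𝓝 0) :=
        ENNReal.tendsto_pow_atTop_nhds_zero_of_lt_one hΛ1
      have hlim2 : Tendsto
          (fun N : ℕ => (∑' n : ℕ, Λ ^ n * μ ((⇑T.symm)^[n] ⁻¹' S ∩ H)) + Λ ^ N)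
          atTop (𝓝 ((∑' n : ℕ, Λ ^ n * μ ((⇑T.symm)^[n] ⁻¹' S ∩ H)) + 0)) :=
        Tendsto.const_add _ hlim
      rw [add_zero] at hlim2
      refine ge_of_tendsto' hlim2 fun N => ?_
      calc μ S = (∑ n ∈ Finset.range N, Λ ^ n * μ ((⇑T.symm)^[n] ⁻¹' S ∩ H)) +
            Λ ^ N * μ ((⇑T.symm)^[N] ⁻¹' S) := iter S hS N
        _ ≤ (∑' n : ℕ, Λ ^ n * μ ((⇑T.symm)^[n] ⁻¹' S ∩ H)) + Λ ^ N * 1 := by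
            gcongr
            · exact ENNReal.sum_le_tsum _
            · exact prob_le_one
        _ = _ := by rw [mul_one]
    · refine Summable.tsum_le_of_sum_range_le ENNReal.summable fun N => ?_
      rw [iter S hS N]
      exact le_self_add
  -- images as preimages
  have himg : ∀ (n : ℕ) (A : Set X), (⇑T)^[n] '' A = (⇑T.symm)^[n] ⁻¹' A := by
    intro n A
    exact congrFun (Set.image_eq_preimage_of_inverse (T.left_inv.iterate n) (T.right_inv.iterate n)) A
  -- Part 1
  have part1 : IsProbabilityMeasure ((1 - Λ)⁻¹ • μ.restrict H) := by
    constructor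
    rw [Measure.smul_apply, Measure.restrict_apply_univ, hμH, smul_eq_mul, hcancel]
  -- Part 2: concentration
  have hzero : ∀ n : ℕ, μ ((⇑T.symm)^[n + 1] ⁻¹' H ∩ H) = 0 := by
    intro n
    have hsum : ∑ k ∈ ({0, n + 1} : Finset ℕ), Λ ^ k * μ ((⇑T.symm)^[k] ⁻¹' H ∩ H) ≤
        ∑' k : ℕ, Λ ^ k * μ ((⇑T.symm)^[k] ⁻¹' H ∩ H) := ENNReal.sum_le_tsum _
    rw [Finset.sum_pair (Nat.succ_ne_zero n).symm, ← rep H hH] at hsum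
    simp only [pow_zero, one_mul, Function.iterate_zero, Set.preimage_id,
      Set.inter_self] at hsum
    have hterm0 : Λ ^ (n + 1) * μ ((⇑T.symm)^[n + 1] ⁻¹' H ∩ H) = 0 := by
      by_contra hne
      exact absurd hsum (not_le.mpr (ENNReal.lt_add_right (measure_ne_top μ H) hne))
    exact (mul_eq_zero.mp hterm0).resolve_left (pow_ne_zero _ hΛ0.ne')
  set G : Set X := ⋂ j : ℕ, (⇑T)^[j + 1] '' Hᶜ with hGdef
  have hGeq : G = ⋂ j : ℕ, (⇑T.symm)^[j + 1] ⁻¹' Hᶜ := by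
    simp only [hGdef, himg]
  have hGmeas : MeasurableSet G := by
    rw [hGeq]; exact MeasurableSet.iInter fun j => hmeasn _ _ hH.compl
  have hdiff : μ (H \ G) = 0 := by
    have hsub : H \ G ⊆ ⋃ j : ℕ, (⇑T.symm)^[j + 1] ⁻¹' H ∩ H := by
      intro x hx
      rw [hGeq] at hx
      obtain ⟨hxH, hxG⟩ := hx
      simp only [Set.mem_iInter, Set.mem_preimage, Set.mem_compl_iff, not_forall,
        not_not] at hxG
      obtain ⟨j, hj⟩ := hxG
      exact Set.mem_iUnion.mpr ⟨j, ⟨hj, hxH⟩⟩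
    refine le_antisymm ?_ zero_le
    calc μ (H \ G) ≤ μ (⋃ j : ℕ, (⇑T.symm)^[j + 1] ⁻¹' H ∩ H) := measure_mono hsub
      _ ≤ ∑' j : ℕ, μ ((⇑T.symm)^[j + 1] ⁻¹' H ∩ H) := measure_iUnion_le _
      _ = 0 := by simp only [hzero, tsum_zero]
  have hμGH : μ (G ∩ H) = 1 - Λ := by
    have h1 : μ (H ∩ G) + μ (H \ G) = μ H := measure_inter_add_diff H hGmeas
    rw [hdiff, add_zero, hμH] at h1
    rw [Set.inter_comm]; exact h1
  have part2 : ((1 - Λ)⁻¹ • μ.restrict H) (G ∩ H) = 1 := by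
    rw [Measure.smul_apply, Measure.restrict_apply (hGmeas.inter hH), Set.inter_assoc,
      Set.inter_self, hμGH, smul_eq_mul, hcancel]
  -- Part 3
  refine ⟨part1, part2, ?_⟩
  ext S hS
  rw [Measure.smul_apply, Measure.sum_apply _ hS]
  have hterm : ∀ n : ℕ,
      (Λ ^ n • ((1 - Λ)⁻¹ • μ.restrict H).map ((⇑T.symm)^[n])) S =
        Λ ^ n * ((1 - Λ)⁻¹ * μ ((⇑T.symm)^[n] ⁻¹' S ∩ H)) := by
    intro n
    rw [Measure.smul_apply, Measure.map_apply (hT'.iterate n) hS, Measure.smul_apply,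
      Measure.restrict_apply (hmeasn n S hS), smul_eq_mul, smul_eq_mul]
  simp only [hterm]
  rw [show (∑' n : ℕ, Λ ^ n * ((1 - Λ)⁻¹ * μ ((⇑T.symm)^[n] ⁻¹' S ∩ H))) =
      (1 - Λ)⁻¹ * ∑' n : ℕ, Λ ^ n * μ ((⇑T.symm)^[n] ⁻¹' S ∩ H) by
    rw [← ENNReal.tsum_mul_left]; congr 1; ext n; ring]
  rw [smul_eq_mul, ← mul_assoc, mul_comm (1 - Λ), hcancel, one_mul]
  exact rep S hS
end

section
/- Let P = (P₀,P₁,P₂) be a probability vector on {0,1,2} with P₁ < 1, and set P* = (P₀/(P₀+P₂), 0, P₂/(P₀+P₂)). Let μ^Σ_P be the product probability measure on Σ whose factor at coordinate n ∈ ℤ is P for n ≥ 0 and P* for n < 0. Then μ^Σ_P is an eigenmeasure of the open shift with decay rate Λ = P₀ + P₂ = 1 − P₁. Moreover, P* is the unique probability vector Q on {0,1,2} such that the product measure with factor P at every coordinate n ≥ 0 and factor Q at every coordinate n < 0 is an eigenmeasure of the open shift for some decay rate. -/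
open MeasureTheory
open scoped ENNReal

/-- The two-sided shift on `Σ = {0,1,2}^ℤ`. -/
def shiftMap (ε : ℤ → Fin 3) : ℤ → Fin 3 := fun n => ε (n + 1)

/-- `μ` is the product measure on `{0,1,2}^ℤ` with one-site weights `P n` at coordinate `n`:
the measure of every cylinder is the product of the corresponding weights. -/
def IsProductMeasure (μ : Measure (ℤ → Fin 3)) (P : ℤ → Fin 3 → ℝ) : Prop :=
  ∀ (s : Finset ℤ) (g : ℤ → Fin 3),
    μ {ε | ∀ i ∈ s, ε i = g i} = ∏ i ∈ s, ENNReal.ofReal (P i (g i))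

/-- `μ` is an eigenmeasure of the open shift (hole `{ε₀ = 1}`) with decay rate `Λ`. -/
def IsOpenShiftEigenmeasure (μ : Measure (ℤ → Fin 3)) (Λ : ℝ≥0∞) : Prop :=
  ∀ S : Set (ℤ → Fin 3), MeasurableSet S →
    μ (shiftMap ⁻¹' S ∩ {ε | ε 0 ≠ 1}) = Λ * μ S

open MeasurableSpace Set

abbrev Cyl (s : Finset ℤ) (g : ℤ → Fin 3) : Set (ℤ → Fin 3) := {ε | ∀ i ∈ s, ε i = g i}

lemma measurableSet_cyl (s : Finset ℤ) (g : ℤ → Fin 3) : MeasurableSet (Cyl s g) := by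
  have h : Cyl s g = ⋂ i ∈ s, (fun ε : ℤ → Fin 3 => ε i) ⁻¹' {g i} := by
    ext ε; simp [Cyl]
  rw [h]
  exact MeasurableSet.biInter s.countable_toSet fun i _ =>
    (measurable_pi_apply i) (measurableSet_singleton _)

def cylSet : Set (Set (ℤ → Fin 3)) := {S | ∃ s g, S = Cyl s g}

lemma isPiSystem_cylSet : IsPiSystem cylSet := by
  rintro _ ⟨s, g, rfl⟩ _ ⟨t, h, rfl⟩ hne
  obtain ⟨ε₀, hε₀s, hε₀t⟩ := hne
  refine ⟨s ∪ t, fun i => if i ∈ s then g i else h i, ?_⟩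
  ext ε
  simp only [Cyl, mem_inter_iff, mem_setOf_eq, Finset.mem_union]
  constructor
  · rintro ⟨hs, ht⟩ i hi
    by_cases his : i ∈ s
    · simp [his, hs i his]
    · simp [his, ht i (hi.resolve_left his)]
  · intro hall
    constructor
    · intro i hi; have := hall i (Or.inl hi); simpa [hi] using this
    · intro i hi
      by_cases his : i ∈ s
      · have h1 := hall i (Or.inl his); rw [if_pos his] at h1
        exact h1.trans ((hε₀s i his).symm.trans (hε₀t i hi))
      · have h1 := hall i (Or.inr hi); rwa [if_neg his] at h1

lemma generateFrom_cylSet :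
    (inferInstance : MeasurableSpace (ℤ → Fin 3)) = generateFrom cylSet := by
  apply le_antisymm
  · show (⨆ i : ℤ, MeasurableSpace.comap (fun ε : ℤ → Fin 3 => ε i) inferInstance) ≤ _
    refine iSup_le fun i => ?_
    rw [← @measurable_iff_comap_le _ _ (generateFrom cylSet) _]
    refine @measurable_to_countable' (Fin 3) (ℤ → Fin 3) _ _ (generateFrom cylSet) _ ?_
    intro a
    apply measurableSet_generateFrom
    refine ⟨{i}, fun _ => a, ?_⟩
    ext ε; simp [Cyl]
  · refine generateFrom_le ?_
    rintro _ ⟨s, g, rfl⟩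
    exact measurableSet_cyl s g


lemma key_cyl
    (P : Fin 3 → ℝ) (hP : ∀ i, 0 ≤ P i) (hPsum : P 0 + P 1 + P 2 = 1) (hP1 : P 1 < 1)
    (Pstar : Fin 3 → ℝ)
    (hPstar : Pstar = fun i => if i = 1 then 0 else P i / (P 0 + P 2))
    (μ : Measure (ℤ → Fin 3))
    (hμ : IsProductMeasure μ (fun n i => if 0 ≤ n then P i else Pstar i))
    (s : Finset ℤ) (g : ℤ → Fin 3) :
    μ (shiftMap ⁻¹' Cyl s g ∩ {ε | ε 0 ≠ 1}) =
      ENNReal.ofReal (P 0 + P 2) * μ (Cyl s g) := by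
  set w : ℤ → Fin 3 → ℝ := fun n i => if 0 ≤ n then P i else Pstar i with hw
  have hpos : 0 < P 0 + P 2 := by linarith
  set t : Finset ℤ := s.image (· + 1) with ht
  set g' : ℤ → Fin 3 := fun j => g (j - 1) with hg'
  have hBt : shiftMap ⁻¹' Cyl s g = Cyl t g' := by
    ext ε
    simp only [Cyl, mem_preimage, mem_setOf_eq, ht, Finset.mem_image, shiftMap, hg']
    constructor
    · rintro hh j ⟨i, his, rfl⟩
      simpa using hh i his
    · intro hh i his
      simpa using hh (i + 1) ⟨i, his, rfl⟩
  have hinj : ∀ x ∈ s, ∀ y ∈ s, x + 1 = y + 1 → x = y := by intro x _ y _ h; omega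
  have hprod_t : μ (Cyl t g') = ∏ i ∈ s, ENNReal.ofReal (w (i + 1) (g i)) := by
    rw [hμ t g', ht, Finset.prod_image hinj]
    refine Finset.prod_congr rfl fun i _ => ?_
    simp [hg']
  have hfacgen : ∀ i : ℤ, i ≠ -1 → ENNReal.ofReal (w (i + 1) (g i))
      = ENNReal.ofReal (w i (g i)) := by
    intro i hne
    rcases le_or_gt 0 i with h | h
    · have h1 : (0:ℤ) ≤ i + 1 := by omega
      simp [hw, h, h1]
    · have h1 : ¬ (0:ℤ) ≤ i + 1 := by omega
      have h2 : ¬ (0:ℤ) ≤ i := by omega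
      simp [hw, h1, h2]
  by_cases hm : (-1 : ℤ) ∈ s
  · by_cases hg1 : g (-1) = 1
    · have hempty : shiftMap ⁻¹' Cyl s g ∩ {ε : ℤ → Fin 3 | ε 0 ≠ 1} = ∅ := by
        ext ε
        simp only [mem_inter_iff, mem_preimage, Cyl, mem_setOf_eq, mem_empty_iff_false,
          iff_false, not_and]
        intro hh
        have h0 := hh (-1) hm
        simp only [shiftMap] at h0
        norm_num at h0
        simp [h0, hg1]
      rw [hempty, measure_empty, hμ s g]
      have hzero : ENNReal.ofReal ((fun n i => if 0 ≤ n then P i else Pstar i) (-1) (g (-1))) = 0 := by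
        norm_num [hPstar, hg1]
      rw [Finset.prod_eq_zero hm hzero, mul_zero]
    · have hsub : shiftMap ⁻¹' Cyl s g ∩ {ε : ℤ → Fin 3 | ε 0 ≠ 1}
          = shiftMap ⁻¹' Cyl s g := by
        refine inter_eq_left.mpr fun ε hε => ?_
        have h0 := hε (-1) hm
        simp only [shiftMap] at h0
        norm_num at h0
        simp only [mem_setOf_eq, h0]
        exact hg1
      rw [hsub, hBt, hprod_t, hμ s g]
      rw [← Finset.mul_prod_erase s _ hm, ← Finset.mul_prod_erase s
        (fun i => ENNReal.ofReal (w i (g i))) hm, ← mul_assoc]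
      have hprods : (∏ x ∈ s.erase (-1), ENNReal.ofReal (w (x + 1) (g x)))
          = ∏ x ∈ s.erase (-1), ENNReal.ofReal (w x (g x)) :=
        Finset.prod_congr rfl fun i hi => hfacgen i (Finset.ne_of_mem_erase hi)
      rw [hprods]
      have hhead : ENNReal.ofReal (w (-1 + 1) (g (-1)))
          = ENNReal.ofReal (P 0 + P 2) * ENNReal.ofReal (w (-1) (g (-1))) := by
        have h1 : w (-1 + 1) (g (-1)) = P (g (-1)) := by norm_num [hw]
        have h2 : w (-1) (g (-1)) = P (g (-1)) / (P 0 + P 2) := by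
          norm_num [hw, hPstar, hg1]
        rw [h1, h2, ← ENNReal.ofReal_mul (le_of_lt hpos),
          mul_div_cancel₀ _ (ne_of_gt hpos)]
      rw [hhead]
  · have h0t : (0 : ℤ) ∉ t := by
      simp only [ht, Finset.mem_image]
      rintro ⟨i, hi, h⟩
      have : i = -1 := by omega
      rw [this] at hi; exact hm hi
    have hne1 : ∀ x : Fin 3, x ≠ 1 ↔ (x = 0 ∨ x = 2) := by decide
    have hsplit : shiftMap ⁻¹' Cyl s g ∩ {ε : ℤ → Fin 3 | ε 0 ≠ 1}
        = Cyl (insert 0 t) (Function.update g' 0 0) ∪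
          Cyl (insert 0 t) (Function.update g' 0 2) := by
      rw [hBt]
      ext ε
      simp only [Cyl, mem_inter_iff, mem_setOf_eq, mem_union, Finset.mem_insert]
      constructor
      · rintro ⟨hcyl, hε0⟩
        rcases (hne1 (ε 0)).mp hε0 with h | h
        · left
          rintro j (rfl | hj)
          · simp [h]
          · rw [Function.update_of_ne (by rintro rfl; exact h0t hj)]
            exact hcyl j hj
        · right
          rintro j (rfl | hj)
          · simp [h]
          · rw [Function.update_of_ne (by rintro rfl; exact h0t hj)]
            exact hcyl j hj
      · rintro (hh | hh)
        · refine ⟨fun j hj => ?_, ?_⟩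
          · have := hh j (Or.inr hj)
            rwa [Function.update_of_ne (by rintro rfl; exact h0t hj)] at this
          · have := hh 0 (Or.inl rfl)
            simp only [Function.update_self] at this
            rw [this]; decide
        · refine ⟨fun j hj => ?_, ?_⟩
          · have := hh j (Or.inr hj)
            rwa [Function.update_of_ne (by rintro rfl; exact h0t hj)] at this
          · have := hh 0 (Or.inl rfl)
            simp only [Function.update_self] at this
            rw [this]; decide
    have hCa : ∀ a : Fin 3, μ (Cyl (insert 0 t) (Function.update g' 0 a))
        = ENNReal.ofReal (P a) * ∏ j ∈ t, ENNReal.ofReal (w j (g' j)) := by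
      intro a
      rw [hμ (insert 0 t) _, Finset.prod_insert h0t]
      have h1 : ENNReal.ofReal (w 0 (Function.update g' 0 a 0)) = ENNReal.ofReal (P a) := by
        simp [hw]
      have h2 : ∀ j ∈ t, ENNReal.ofReal (w j (Function.update g' 0 a j))
          = ENNReal.ofReal (w j (g' j)) := by
        intro j hj
        rw [Function.update_of_ne (by rintro rfl; exact h0t hj)]
      rw [h1, Finset.prod_congr rfl h2]
    have hdisj : Disjoint (Cyl (insert 0 t) (Function.update g' 0 0))
        (Cyl (insert 0 t) (Function.update g' 0 2)) := by
      rw [Set.disjoint_left]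
      intro ε h1 h2
      have e1 := h1 0 (Finset.mem_insert_self 0 t)
      have e2 := h2 0 (Finset.mem_insert_self 0 t)
      simp only [Function.update_self] at e1 e2
      rw [e1] at e2
      exact absurd e2 (by decide)
    rw [hsplit, measure_union hdisj (measurableSet_cyl _ _), hCa 0, hCa 2,
      ← add_mul, ← ENNReal.ofReal_add (hP 0) (hP 2)]
    congr 1
    rw [← hμ t g', hprod_t, hμ s g]
    exact Finset.prod_congr rfl fun i hi => hfacgen i (by rintro rfl; exact hm hi)

lemma measurable_shiftMap : Measurable shiftMap :=
  measurable_pi_iff.mpr fun n => measurable_pi_apply (n + 1)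

lemma measurableSet_hole : MeasurableSet {ε : ℤ → Fin 3 | ε 0 ≠ 1} :=
  ((measurable_pi_apply 0) (measurableSet_singleton 1)).compl

lemma part1
    (P : Fin 3 → ℝ) (hP : ∀ i, 0 ≤ P i) (hPsum : P 0 + P 1 + P 2 = 1) (hP1 : P 1 < 1)
    (Pstar : Fin 3 → ℝ)
    (hPstar : Pstar = fun i => if i = 1 then 0 else P i / (P 0 + P 2))
    (μ : Measure (ℤ → Fin 3)) [IsProbabilityMeasure μ]
    (hμ : IsProductMeasure μ (fun n i => if 0 ≤ n then P i else Pstar i)) :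
    IsOpenShiftEigenmeasure μ (ENNReal.ofReal (P 0 + P 2)) := by
  set Λ : ℝ≥0∞ := ENNReal.ofReal (P 0 + P 2) with hΛ
  set ν₁ : Measure (ℤ → Fin 3) := (μ.restrict {ε | ε 0 ≠ 1}).map shiftMap with hν₁
  set ν₂ : Measure (ℤ → Fin 3) := Λ • μ with hν₂
  have happ : ∀ S : Set (ℤ → Fin 3), MeasurableSet S →
      ν₁ S = μ (shiftMap ⁻¹' S ∩ {ε | ε 0 ≠ 1}) := by
    intro S hS
    rw [hν₁, Measure.map_apply measurable_shiftMap hS,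
      Measure.restrict_apply (measurable_shiftMap hS)]
  haveI : IsFiniteMeasure ν₁ := by
    constructor
    rw [happ univ MeasurableSet.univ]
    exact lt_of_le_of_lt (measure_mono (inter_subset_right)) (measure_lt_top μ _)
  haveI : IsFiniteMeasure ν₂ := by
    constructor
    rw [hν₂, Measure.smul_apply, smul_eq_mul]
    exact ENNReal.mul_lt_top ENNReal.ofReal_lt_top (measure_lt_top μ _)
  have hext : ν₁ = ν₂ := by
    refine ext_of_generate_finite cylSet generateFrom_cylSet isPiSystem_cylSet ?_ ?_
    · rintro _ ⟨s, g, rfl⟩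
      rw [happ _ (measurableSet_cyl s g), hν₂, Measure.smul_apply, smul_eq_mul]
      exact key_cyl P hP hPsum hP1 Pstar hPstar μ hμ s g
    · have huniv : (univ : Set (ℤ → Fin 3)) = Cyl ∅ (fun _ => 0) := by
        ext ε; simp [Cyl]
      rw [huniv, happ _ (measurableSet_cyl ∅ _), hν₂, Measure.smul_apply, smul_eq_mul]
      exact key_cyl P hP hPsum hP1 Pstar hPstar μ hμ ∅ _
  intro S hS
  rw [← happ S hS, hext, hν₂, Measure.smul_apply, smul_eq_mul]

/-- For a probability vector `P = (P₀,P₁,P₂)` with `P₁ < 1` and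
`P* = (P₀/(P₀+P₂), 0, P₂/(P₀+P₂))`, the product measure with factor `P` at coordinates
`n ≥ 0` and `P*` at coordinates `n < 0` is an eigenmeasure of the open shift with decay
rate `P₀ + P₂ = 1 - P₁`; moreover `P*` is the unique probability vector with this
property (for any decay rate). -/
theorem bernoulli_eigenmeasure_of_open_shift
    (P : Fin 3 → ℝ) (hP : ∀ i, 0 ≤ P i) (hPsum : P 0 + P 1 + P 2 = 1) (hP1 : P 1 < 1)
    (Pstar : Fin 3 → ℝ)
    (hPstar : Pstar = fun i => if i = 1 then 0 else P i / (P 0 + P 2))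
    (μ : Measure (ℤ → Fin 3)) [IsProbabilityMeasure μ]
    (hμ : IsProductMeasure μ (fun n i => if 0 ≤ n then P i else Pstar i)) :
    IsOpenShiftEigenmeasure μ (ENNReal.ofReal (P 0 + P 2)) ∧
    ∀ (Q : Fin 3 → ℝ), (∀ i, 0 ≤ Q i) → Q 0 + Q 1 + Q 2 = 1 →
      ∀ ν : Measure (ℤ → Fin 3), IsProbabilityMeasure ν →
        IsProductMeasure ν (fun n i => if 0 ≤ n then P i else Q i) →
        (∃ Λ : ℝ≥0∞, IsOpenShiftEigenmeasure ν Λ) →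
        Q = Pstar := by
  have hpos : 0 < P 0 + P 2 := by linarith
  refine ⟨part1 P hP hPsum hP1 Pstar hPstar μ hμ, ?_⟩
  rintro Q hQ hQsum ν hνprob hν ⟨Λ, hΛ⟩
  -- single-coordinate cylinder measures
  have hcyl0 : ∀ a : Fin 3, ν {ε : ℤ → Fin 3 | ε 0 = a} = ENNReal.ofReal (P a) := by
    intro a
    have h := hν {0} (fun _ => a)
    simp only [Finset.mem_singleton, forall_eq, Finset.prod_singleton] at h
    norm_num at h
    exact h
  have hcylm : ∀ a : Fin 3, ν {ε : ℤ → Fin 3 | ε (-1) = a} = ENNReal.ofReal (Q a) := by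
    intro a
    have h := hν {-1} (fun _ => a)
    simp only [Finset.mem_singleton, forall_eq, Finset.prod_singleton] at h
    norm_num at h
    exact h
  -- the value of Λ
  have hΛval : Λ = ENNReal.ofReal (P 0 + P 2) := by
    have h := hΛ univ MeasurableSet.univ
    rw [preimage_univ, univ_inter, measure_univ, mul_one] at h
    have hAsplit : {ε : ℤ → Fin 3 | ε 0 ≠ 1}
        = {ε : ℤ → Fin 3 | ε 0 = 0} ∪ {ε : ℤ → Fin 3 | ε 0 = 2} := by
      ext ε
      simp only [mem_setOf_eq, mem_union]
      revert ε
      intro ε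
      rcases Fin.exists_fin_two.mp ⟨0, rfl⟩ with _
      constructor
      · intro h'
        have : ∀ x : Fin 3, x ≠ 1 → (x = 0 ∨ x = 2) := by decide
        exact this _ h'
      · rintro (h' | h') <;> simp [h']
    have hdisj : Disjoint {ε : ℤ → Fin 3 | ε 0 = 0} {ε : ℤ → Fin 3 | ε 0 = 2} := by
      rw [Set.disjoint_left]
      intro ε h1 h2
      rw [mem_setOf_eq] at h1 h2
      rw [h1] at h2
      exact absurd h2 (by decide)
    have hmeas2 : MeasurableSet {ε : ℤ → Fin 3 | ε 0 = 2} :=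
      (measurable_pi_apply 0) (measurableSet_singleton 2)
    rw [← h, hAsplit, measure_union hdisj hmeas2, hcyl0 0, hcyl0 2,
      ← ENNReal.ofReal_add (hP 0) (hP 2)]
  have hΛne : Λ ≠ 0 := by
    rw [hΛval]
    simpa using hpos
  have hΛtop : Λ ≠ ⊤ := by rw [hΛval]; exact ENNReal.ofReal_ne_top
  -- apply eigen relation to S_a = {ε | ε (-1) = a}
  have hpre : ∀ a : Fin 3, shiftMap ⁻¹' {ε : ℤ → Fin 3 | ε (-1) = a}
      = {ε : ℤ → Fin 3 | ε 0 = a} := by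
    intro a
    ext ε
    simp only [mem_preimage, mem_setOf_eq, shiftMap]
    norm_num
  have hmeasm : ∀ a : Fin 3, MeasurableSet {ε : ℤ → Fin 3 | ε (-1) = a} := by
    intro a
    show MeasurableSet ((fun ε : ℤ → Fin 3 => ε (-1)) ⁻¹' {a})
    exact (measurable_pi_apply (-1)) (measurableSet_singleton a)
  have heig : ∀ a : Fin 3, ν ({ε : ℤ → Fin 3 | ε 0 = a} ∩ {ε | ε 0 ≠ 1})
      = Λ * ENNReal.ofReal (Q a) := by
    intro a
    have h := hΛ _ (hmeasm a)
    rw [hpre a, hcylm a] at h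
    exact h
  -- Q 1 = 0
  have hQ1 : Q 1 = 0 := by
    have h := heig 1
    have hemp : ({ε : ℤ → Fin 3 | ε 0 = 1} ∩ {ε | ε 0 ≠ 1}) = ∅ := by
      ext ε; simp only [mem_inter_iff, mem_setOf_eq, mem_empty_iff_false, iff_false, not_and]
      intro h'; simp [h']
    rw [hemp, measure_empty] at h
    have := (mul_eq_zero.mp h.symm).resolve_left hΛne
    have hle := ENNReal.ofReal_eq_zero.mp this
    linarith [hQ 1]
  -- Q 0 and Q 2
  have hQa : ∀ a : Fin 3, a ≠ 1 → P a = (P 0 + P 2) * Q a := by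
    intro a ha
    have h := heig a
    have hfull : ({ε : ℤ → Fin 3 | ε 0 = a} ∩ {ε | ε 0 ≠ 1})
        = {ε : ℤ → Fin 3 | ε 0 = a} := by
      refine inter_eq_left.mpr fun ε hε => ?_
      rw [mem_setOf_eq] at hε ⊢
      rw [hε]; exact ha
    rw [hfull, hcyl0 a, hΛval, ← ENNReal.ofReal_mul (le_of_lt hpos)] at h
    exact (ENNReal.ofReal_eq_ofReal_iff (hP a)
      (mul_nonneg (le_of_lt hpos) (hQ a))).mp h
  have hQ0 : Q 0 = P 0 / (P 0 + P 2) := by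
    have := hQa 0 (by decide)
    field_simp
    linarith
  have hQ2 : Q 2 = P 2 / (P 0 + P 2) := by
    have := hQa 2 (by decide)
    field_simp
    linarith
  funext i
  fin_cases i
  · rw [hPstar]; simpa using hQ0
  · rw [hPstar]; simpa using hQ1
  · rw [hPstar]; simpa using hQ2
end
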